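/- Let h be a monic polynomial of degree m with roots α_1,...,α_m (with multiplicity) and let f(x) = h(x^k). Then the roots of f are ζ_k^s α_t^{1/k} for s = 0,...,k-1 and t = 1,...,m, and the Gram matrix of the Vandermonde matrix M_f satisfies (M†_f M_f)_{ij} = 0 whenever k ∤ (i-j), and (M†_f M_f)_{ij} = k Σ_t α_t^{i/k} conj(α_t)^{j/k} when k | (i-j). -/

import Mathlib

open Finset Matrix Polynomial

/-- The Vandermonde matrix of `f(x) = h(x^k)`: rows indexed by powers
`0,…,mk-1`, columns by the roots `ζ_k^s · α_t^{1/k}` of `f`. -/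
noncomputable def vdmComp (m k : ℕ) (ζ : ℂ) (ρ : Fin m → ℂ) :
    Matrix (Fin (m * k)) (Fin k × Fin m) ℂ :=
  fun i st => (ζ ^ (st.1 : ℕ) * ρ st.2) ^ (i : ℕ)

/-- Let `h` be monic of degree `m` with roots `α_1,…,α_m` (with multiplicity) and
`f(x) = h(x^k)`.  Then the roots of `f` are `ζ_k^s α_t^{1/k}` (`ρ t` a fixed `k`-th
root of `α t`), and the Gram matrix of the Vandermonde matrix `M_f` satisfies
`(M†M)_{ij} = 0` when `k ∤ i-j` and `(M†M)_{ij} = k Σ_t α_t^{i/k} conj(α_t)^{j/k}`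
when `k ∣ i-j`. -/
theorem gram_of_comp_pow (m k : ℕ) (hm : 0 < m) (hk : 0 < k)
    (α ρ : Fin m → ℂ) (hρ : ∀ t, ρ t ^ k = α t)
    (ζ : ℂ) (hζ : IsPrimitiveRoot ζ k)
    (h f : Polynomial ℂ) (hh : h = ∏ t, (X - C (α t))) (hf : f = h.comp (X ^ k)) :
    f = ∏ s : Fin k, ∏ t : Fin m, (X - C (ζ ^ (s : ℕ) * ρ t)) ∧
      ∀ i j : Fin (m * k),
        (¬ (k : ℤ) ∣ ((i : ℤ) - (j : ℤ)) →
          (vdmComp m k ζ ρ * (vdmComp m k ζ ρ)ᴴ) i j = 0) ∧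
        ((k : ℤ) ∣ ((i : ℤ) - (j : ℤ)) →
          (vdmComp m k ζ ρ * (vdmComp m k ζ ρ)ᴴ) i j =
            (k : ℂ) * ∑ t, ρ t ^ (i : ℕ) * (starRingEnd ℂ) (ρ t) ^ (j : ℕ)) := by
  have hζ0 : ζ ≠ 0 := by
    intro h0
    have := hζ.pow_eq_one
    rw [h0, zero_pow hk.ne'] at this
    exact zero_ne_one this
  have hnorm : ‖ζ‖ = 1 := Complex.norm_eq_one_of_pow_eq_one hζ.pow_eq_one hk.ne'
  have hconj : (starRingEnd ℂ) ζ = ζ⁻¹ := by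
    rw [Complex.inv_def, Complex.normSq_eq_norm_sq, hnorm]
    simp
  constructor
  · rw [hf, hh]
    rw [Polynomial.prod_comp]
    rw [Finset.prod_comm]
    refine Finset.prod_congr rfl fun t _ => ?_
    have : (X - C (α t)).comp (X ^ k) = X ^ k - C (α t) := by
      simp [sub_comp]
    rw [this, X_pow_sub_C_eq_prod hζ hk (hρ t)]
    rw [← Fin.prod_univ_eq_prod_range (fun s => (X - C (ζ ^ s * ρ t))) k]
  · intro i j
    -- compute the entry
    have entry : (vdmComp m k ζ ρ * (vdmComp m k ζ ρ)ᴴ) i j =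
        (∑ s : Fin k, (ζ ^ ((i : ℤ) - (j : ℤ))) ^ (s : ℕ)) *
          ∑ t, ρ t ^ (i : ℕ) * (starRingEnd ℂ) (ρ t) ^ (j : ℕ) := by
      rw [Matrix.mul_apply]
      rw [← Finset.univ_product_univ, Finset.sum_product]
      rw [Finset.sum_mul]
      refine Finset.sum_congr rfl fun s _ => ?_
      rw [Finset.mul_sum]
      refine Finset.sum_congr rfl fun t _ => ?_
      simp only [vdmComp, conjTranspose_apply, Pi.star_apply, RCLike.star_def, map_pow, _root_.map_mul,
        hconj]
      rw [mul_pow, mul_pow]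
      have : ((ζ ^ ((i : ℤ) - (j : ℤ))) ^ (s : ℕ)) =
          (ζ ^ (s : ℕ)) ^ (i : ℕ) * ((ζ⁻¹) ^ (s : ℕ)) ^ (j : ℕ) := by
        rw [inv_pow, inv_pow, ← pow_mul, ← pow_mul,
          ← zpow_natCast ζ ((s : ℕ) * (i : ℕ)), ← zpow_natCast ζ ((s : ℕ) * (j : ℕ)),
          ← _root_.zpow_neg, ← zpow_add₀ hζ0,
          ← zpow_natCast (ζ ^ ((i : ℤ) - (j : ℤ))) (s : ℕ), ← _root_.zpow_mul]
        congr 1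
        push_cast
        ring
      rw [this]; ring
    constructor
    · intro hndvd
      have hne : ζ ^ ((i : ℤ) - (j : ℤ)) ≠ 1 := by
        intro h1
        exact hndvd ((hζ.zpow_eq_one_iff_dvd _).mp h1)
      have hsum : (∑ s : Fin k, (ζ ^ ((i : ℤ) - (j : ℤ))) ^ (s : ℕ)) = 0 := by
        rw [Fin.sum_univ_eq_sum_range (fun s => (ζ ^ ((i : ℤ) - (j : ℤ))) ^ s) k]
        rw [geom_sum_eq hne]
        rw [← zpow_natCast (ζ ^ ((i : ℤ) - (j : ℤ))) k, ← _root_.zpow_mul, mul_comm, _root_.zpow_mul,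
          zpow_natCast, hζ.pow_eq_one, _root_.one_zpow]
        simp
      rw [entry, hsum, zero_mul]
    · intro hdvd
      have h1 : ζ ^ ((i : ℤ) - (j : ℤ)) = 1 := (hζ.zpow_eq_one_iff_dvd _).mpr hdvd
      rw [entry, h1]
      simp
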